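/- For all prime powers q and positive integers n, the total number of subspaces of GF(q)^n satisfies q^{⌊n/2⌋(n-⌊n/2⌋)} ≤ |E(q,n)| < 2 K_q^{-1} θ(q) q^{⌊n/2⌋(n-⌊n/2⌋)}, where θ(q) = ∑_{m=0}^∞ q^{-m²}. -/

import Mathlib

/-- `K_q = ∏_{j=1}^∞ (1 - q^{-j})`. -/
noncomputable def Kq (q : ℕ) : ℝ := ∏' j : ℕ, (1 - ((q : ℝ))⁻¹ ^ (j + 1))

/-- `θ(q) = ∑_{m=0}^∞ q^{-m²}`. -/
noncomputable def theta (q : ℕ) : ℝ := ∑' m : ℕ, ((q : ℝ))⁻¹ ^ (m * m)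

open Finset Real

section RealLemmas
variable {q : ℕ}

lemma hx0 (hq : 2 ≤ q) : (0:ℝ) < (q:ℝ)⁻¹ := by positivity
lemma hx1 (hq : 2 ≤ q) : ((q:ℝ))⁻¹ < 1 := by
  rw [inv_lt_one_iff₀]; right; exact_mod_cast by omega
lemma hxhalf (hq : 2 ≤ q) : ((q:ℝ))⁻¹ ≤ 2⁻¹ := by
  apply inv_anti₀ (by norm_num); exact_mod_cast hq

lemma theta_summable (hq : 2 ≤ q) : Summable (fun m : ℕ => ((q:ℝ))⁻¹ ^ (m*m)) := by
  refine Summable.of_nonneg_of_le (fun m => by positivity) (fun m => ?_)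
    (summable_geometric_of_lt_one (hx0 hq).le (hx1 hq))
  refine pow_le_pow_of_le_one (hx0 hq).le (hx1 hq).le ?_
  rcases Nat.eq_zero_or_pos m with h|h
  · omega
  · calc m = m * 1 := (mul_one m).symm
      _ ≤ m * m := Nat.mul_le_mul_left m h

lemma sum_lt_theta (hq : 2 ≤ q) (t : ℕ) :
    ∑ d ∈ range t, ((q:ℝ))⁻¹ ^ (d*d) < theta q := by
  have h1 : ∑ d ∈ range t, ((q:ℝ))⁻¹ ^ (d*d) < ∑ d ∈ range (t+1), ((q:ℝ))⁻¹ ^ (d*d) := by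
    rw [Finset.sum_range_succ]
    have : (0:ℝ) < ((q:ℝ))⁻¹ ^ (t*t) := by positivity
    linarith
  exact h1.trans_le (Summable.sum_le_tsum _ (fun i _ => by positivity) (theta_summable hq))

lemma theta_pos (hq : 2 ≤ q) : 0 < theta q := by
  simpa using sum_lt_theta hq 0

lemma one_sub_pos' (hq : 2 ≤ q) (s : ℕ) (hs : 1 ≤ s) : (0:ℝ) < 1 - ((q:ℝ))⁻¹ ^ s := by
  have : ((q:ℝ))⁻¹ ^ s < 1 := pow_lt_one₀ (hx0 hq).le (hx1 hq) (by omega)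
  linarith

lemma log_summable (hq : 2 ≤ q) (t : ℕ) :
    Summable (fun j : ℕ => Real.log (1 - ((q:ℝ))⁻¹ ^ (j+t+1))) := by
  set x : ℝ := ((q:ℝ))⁻¹ with hx
  have h0 := hx0 hq
  have h1 := hx1 hq
  have hsmall : ∀ j : ℕ, x ^ (j+t+1) ≤ 2⁻¹ := fun j => by
    calc x ^ (j+t+1) ≤ x ^ 1 := pow_le_pow_of_le_one h0.le h1.le (by omega)
    _ ≤ 2⁻¹ := by simpa using hxhalf hq
  have hpos : ∀ j : ℕ, (0:ℝ) < 1 - x ^ (j+t+1) := fun j => one_sub_pos' hq _ (by omega)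
  rw [← summable_neg_iff]
  have hdom : Summable (fun j : ℕ => 2 * x ^ (j+t+1)) := by
    apply Summable.mul_left
    have h := (summable_nat_add_iff (t+1)).2 (summable_geometric_of_lt_one h0.le h1)
    exact h.congr (fun j => by rw [hx]; ring)
  refine Summable.of_nonneg_of_le (fun j => ?_) (fun j => ?_) hdom
  · rw [neg_nonneg]
    refine Real.log_nonpos (hpos j).le ?_
    have : (0:ℝ) < x ^ (j+t+1) := by positivity
    linarith
  · set a : ℝ := x ^ (j+t+1) with hadef
    have ha : (0:ℝ) < a := by positivity
    have hb : a ≤ 2⁻¹ := hsmall j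
    have hp : (0:ℝ) < 1 - a := hpos j
    have key : Real.log ((1 - a)⁻¹) ≤ (1 - a)⁻¹ - 1 := Real.log_le_sub_one_of_pos (by positivity)
    rw [Real.log_inv] at key
    have h4 : (1 - a)⁻¹ ≤ 2 := by
      have h5 : (2:ℝ)⁻¹ ≤ 1 - a := by linarith
      calc (1-a)⁻¹ ≤ ((2:ℝ)⁻¹)⁻¹ := inv_anti₀ (by norm_num) h5
      _ = 2 := by norm_num
    have h6 : (1 - a)⁻¹ - 1 = a * (1 - a)⁻¹ := by field_simp; ring
    have h7 : a * (1 - a)⁻¹ ≤ a * 2 := mul_le_mul_of_nonneg_left h4 ha.le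
    linarith

lemma Kq_hasprod (hq : 2 ≤ q) (t : ℕ) :
    HasProd (fun j : ℕ => 1 - ((q:ℝ))⁻¹ ^ (j+t+1))
      (Real.exp (∑' j : ℕ, Real.log (1 - ((q:ℝ))⁻¹ ^ (j+t+1)))) := by
  have hs := (log_summable hq t).hasSum
  exact hs.rexp.congr_fun fun j => (Real.exp_log (one_sub_pos' hq (j+t+1) (by omega))).symm

lemma Kq_pos (hq : 2 ≤ q) : 0 < Kq q := by
  have h := (Kq_hasprod hq 0).tprod_eq
  simp only [Nat.add_zero] at h
  rw [Kq, h]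
  exact Real.exp_pos _

lemma Kq_le_prod (hq : 2 ≤ q) (t : ℕ) :
    Kq q ≤ ∏ i ∈ range t, (1 - ((q:ℝ))⁻¹ ^ (i+1)) := by
  have hK : Kq q = Real.exp (∑' j : ℕ, Real.log (1 - ((q:ℝ))⁻¹ ^ (j+1))) := by
    have h := (Kq_hasprod hq 0).tprod_eq
    simp only [Nat.add_zero] at h
    rw [Kq, h]
  have hsum : Summable (fun j : ℕ => Real.log (1 - ((q:ℝ))⁻¹ ^ (j+1))) := by
    have h := log_summable hq 0
    simpa only [Nat.add_zero] using h
  have hsplit := (Summable.sum_add_tsum_nat_add (f := fun j : ℕ => Real.log (1 - ((q:ℝ))⁻¹ ^ (j+1))) t hsum).symm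
  have htail : (∑' j : ℕ, Real.log (1 - ((q:ℝ))⁻¹ ^ (j+t+1))) ≤ 0 := by
    refine tsum_nonpos fun j => ?_
    refine Real.log_nonpos (one_sub_pos' hq _ (by omega)).le ?_
    have : (0:ℝ) < ((q:ℝ))⁻¹ ^ (j+t+1) := by positivity
    linarith
  have hexp : Real.exp (∑ i ∈ range t, Real.log (1 - ((q:ℝ))⁻¹ ^ (i+1)))
      = ∏ i ∈ range t, (1 - ((q:ℝ))⁻¹ ^ (i+1)) := by
    rw [Real.exp_sum]
    exact Finset.prod_congr rfl fun i _ => Real.exp_log (one_sub_pos' hq _ (by omega))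
  have hts : (∑' j : ℕ, Real.log (1 - ((q:ℝ))⁻¹ ^ (j+t+1)))
      = ∑' j : ℕ, Real.log (1 - ((q:ℝ))⁻¹ ^ (j+1+t)) := by
    exact tsum_congr fun j => by rw [Nat.add_right_comm]
  calc Kq q = Real.exp (∑ i ∈ range t, Real.log (1 - ((q:ℝ))⁻¹ ^ (i+1))
          + ∑' j : ℕ, Real.log (1 - ((q:ℝ))⁻¹ ^ (j+t+1))) := by
        rw [hK]
        exact congrArg Real.exp hsplit
    _ = (∏ i ∈ range t, (1 - ((q:ℝ))⁻¹ ^ (i+1)))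
          * Real.exp (∑' j : ℕ, Real.log (1 - ((q:ℝ))⁻¹ ^ (j+t+1))) := by
        rw [Real.exp_add, hexp]
    _ ≤ (∏ i ∈ range t, (1 - ((q:ℝ))⁻¹ ^ (i+1))) * 1 := by
        refine mul_le_mul_of_nonneg_left ?_ ?_
        · exact Real.exp_le_one_iff.mpr htail
        · exact Finset.prod_nonneg fun i _ => (one_sub_pos' hq _ (by omega)).le
    _ = _ := mul_one _

end RealLemmas

section Counting
open Module

lemma nat_card_sigma {ι : Type*} [Fintype ι] (β : ι → Type*) [∀ i, Finite (β i)] :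
    Nat.card (Σ i, β i) = ∑ i, Nat.card (β i) := by
  classical
  haveI : ∀ i, Fintype (β i) := fun i => Fintype.ofFinite _
  simp [Nat.card_eq_fintype_card, Fintype.card_sigma]

variable (F : Type) [Field F] [Fintype F] (n : ℕ)

lemma finite_submod : Finite (Submodule F (Fin n → F)) :=
  Finite.of_injective (fun W => (W : Set (Fin n → F))) SetLike.coe_injective

lemma card_partition :
    Nat.card (Submodule F (Fin n → F))
      = ∑ k ∈ Finset.range (n+1),
          Nat.card {W : Submodule F (Fin n → F) // finrank F W = k} := by
  haveI := finite_submod F n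
  have e : Submodule F (Fin n → F) ≃
      Σ k : Fin (n+1), {W : Submodule F (Fin n → F) // finrank F W = (k : ℕ)} :=
    { toFun := fun W => ⟨⟨finrank F W, by
        have h1 : finrank F W ≤ finrank F (Fin n → F) := Submodule.finrank_le W
        have h2 : finrank F (Fin n → F) = n := by simp
        omega⟩, W, rfl⟩
      invFun := fun p => p.2.1
      left_inv := fun W => rfl
      right_inv := fun p => by
        rcases p with ⟨⟨k, hk⟩, W, hW⟩
        simp only [Fin.val_mk] at hW
        subst hW
        rfl }
  rw [Nat.card_congr e, nat_card_sigma]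
  exact Fin.sum_univ_eq_sum_range (fun k => Nat.card {W : Submodule F (Fin n → F) // finrank F W = k}) (n+1)

lemma card_dim_le (k : ℕ) (hk : k ≤ n) :
    Nat.card {W : Submodule F (Fin n → F) // finrank F W = k}
      * ∏ i ∈ Finset.range k, (Fintype.card F ^ k - Fintype.card F ^ i)
      ≤ Fintype.card F ^ (n * k) := by
  classical
  haveI := finite_submod F n
  set B := {W : Submodule F (Fin n → F) // finrank F W = k}
  -- key : coerced independent tuples span W
  have key : ∀ (W : Submodule F (Fin n → F)) (hW : finrank F W = k)
      (s : Fin k → W) (hs : LinearIndependent F s),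
      Submodule.span F (Set.range (fun i => (s i : Fin n → F))) = W := by
    intro W hW s hs
    have hcomp : (fun i => (s i : Fin n → F)) = W.subtype ∘ s := rfl
    rw [hcomp, Set.range_comp, Submodule.span_image,
      hs.span_eq_top_of_card_eq_finrank' (by simp [hW]), Submodule.map_subtype_top]
  -- the injection
  have hinj : Function.Injective
      (fun p : (Σ W : B, {s : Fin k → (W.1 : Submodule F (Fin n → F)) // LinearIndependent F s}) =>
        (fun i => ((p.2.1 i : (Fin n → F)))) : _ → (Fin k → (Fin n → F))) := by
    rintro ⟨⟨W₁, h₁⟩, s₁, hs₁⟩ ⟨⟨W₂, h₂⟩, s₂, hs₂⟩ h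
    simp only at h
    have hW : W₁ = W₂ := by
      rw [← key W₁ h₁ s₁ hs₁, ← key W₂ h₂ s₂ hs₂, h]
    subst hW
    have hss : s₁ = s₂ := funext fun i => Subtype.ext (congrFun h i)
    subst hss
    rfl
  have hcard := Nat.card_le_card_of_injective _ hinj
  have hfun : Nat.card (Fin k → (Fin n → F)) = Fintype.card F ^ (n * k) := by
    simp [Nat.card_eq_fintype_card, pow_mul]
  rw [hfun] at hcard
  refine le_trans (le_of_eq ?_) hcard
  rw [nat_card_sigma]
  have hfib : ∀ W : B,
      Nat.card {s : Fin k → (W.1 : Submodule F (Fin n → F)) // LinearIndependent F s}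
        = ∏ i ∈ Finset.range k, (Fintype.card F ^ k - Fintype.card F ^ i) := by
    intro W
    have hfr : finrank F (W.1 : Submodule F (Fin n → F)) = k := W.2
    rw [card_linearIndependent (K := F) (V := W.1) (by rw [hfr])]
    rw [hfr, ← Fin.prod_univ_eq_prod_range]
  rw [Finset.sum_congr rfl (fun W _ => hfib W), Finset.sum_const, Finset.card_univ,
    smul_eq_mul, Nat.card_eq_fintype_card]

end Counting

section Lower
open Module

lemma card_lower (F : Type) [Field F] [Fintype F] (n m : ℕ) (hm : m ≤ n) :
    Fintype.card F ^ (m * (n - m)) ≤ Nat.card (Submodule F (Fin n → F)) := by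
  classical
  haveI := finite_submod F n
  have g : (Fin m ⊕ Fin (n - m)) ≃ Fin n := finSumFinEquiv.trans (finCongr (by omega))
  let e : ((Fin m → F) × (Fin (n - m) → F)) ≃ₗ[F] (Fin n → F) :=
    (LinearEquiv.sumArrowLequivProdArrow (Fin m) (Fin (n-m)) F F).symm.trans
      (LinearEquiv.funCongrLeft F F g.symm)
  have hinj : Function.Injective
      (fun A : ((Fin m → F) →ₗ[F] (Fin (n - m) → F)) =>
        (LinearMap.graph A).map (e : ((Fin m → F) × (Fin (n - m) → F)) →ₗ[F] (Fin n → F))) := by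
    intro A₁ A₂ h
    have hmap : LinearMap.graph A₁ = LinearMap.graph A₂ :=
      Submodule.map_injective_of_injective e.injective h
    refine LinearMap.ext fun x => ?_
    have h1 : ((x, A₁ x) : (Fin m → F) × (Fin (n - m) → F)) ∈ LinearMap.graph A₁ :=
      (LinearMap.mem_graph_iff _ _).2 rfl
    rw [hmap] at h1
    exact (LinearMap.mem_graph_iff _ _).1 h1
  have hcard := Nat.card_le_card_of_injective _ hinj
  refine le_trans (le_of_eq ?_) hcard
  rw [Nat.card_congr (LinearMap.toMatrix' : ((Fin m → F) →ₗ[F] (Fin (n - m) → F)) ≃ₗ[F] Matrix (Fin (n-m)) (Fin m) F).toEquiv]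
  rw [show Matrix (Fin (n-m)) (Fin m) F = (Fin (n-m) → Fin m → F) from rfl]
  simp [Nat.card_eq_fintype_card, pow_mul, mul_comm]
end Lower

lemma expo_bound (n k : ℕ) (hk : k ≤ n) :
    k * (n - k) + (if k ≤ n/2 then n/2 - k else k - n/2 - 1)^2 ≤ n/2 * (n - n/2) := by
  set m := n/2 with hm
  have h1 : 2*m ≤ n ∧ n ≤ 2*m+1 := by omega
  split_ifs with h
  · obtain ⟨d, hd⟩ : ∃ d, k + d = m := ⟨m - k, by omega⟩
    obtain ⟨s, hs⟩ : ∃ s, m + s = n := ⟨n - m, by omega⟩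
    have h2 : n - k = d + s := by omega
    have h3 : n - m = s := by omega
    have h4 : m - k = d := by omega
    rw [h2, h3, h4]
    have hms : m ≤ s := by omega
    nlinarith
  · obtain ⟨e, he⟩ : ∃ e, k = m + 1 + e := ⟨k - m - 1, by omega⟩
    obtain ⟨r, hr⟩ : ∃ r, k + r = n := ⟨n - k, by omega⟩
    have h2 : n - k = r := by omega
    have h3 : n - m = 1 + e + r := by omega
    have h4 : k - m - 1 = e := by omega
    have h5 : e + r ≤ m := by omega
    rw [h2, h3, h4]
    nlinarith

section TermBound
variable {q : ℕ}

lemma term_bound (hq : 2 ≤ q) (n k : ℕ) (hk : k ≤ n) :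
    (q:ℝ)^(k*(n-k)) ≤ (q:ℝ)^(n/2*(n-n/2))
      * ((q:ℝ))⁻¹^((if k ≤ n/2 then n/2 - k else k - n/2 - 1)^2) := by
  set g := (if k ≤ n/2 then n/2 - k else k - n/2 - 1)^2 with hgdef
  have hg : k*(n-k) + g ≤ n/2*(n-n/2) := expo_bound n k hk
  have hq1 : (1:ℝ) ≤ (q:ℝ) := by exact_mod_cast (by omega : 1 ≤ q)
  have hmain : (q:ℝ)^(k*(n-k)) * (q:ℝ)^g ≤ (q:ℝ)^(n/2*(n-n/2)) := by
    rw [← pow_add]; exact pow_le_pow_right₀ hq1 hg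
  have hpow : (0:ℝ) < (q:ℝ)^g := by positivity
  calc (q:ℝ)^(k*(n-k)) ≤ (q:ℝ)^(n/2*(n-n/2)) / (q:ℝ)^g := (le_div_iff₀ hpow).2 hmain
    _ = _ := by rw [div_eq_mul_inv, inv_pow]

lemma sum_pow_lt (hq : 2 ≤ q) (n : ℕ) :
    ∑ k ∈ range (n+1), (q:ℝ)^(k*(n-k))
      < (q:ℝ)^(n/2*(n-n/2)) * (2 * theta q) := by
  set m := n/2 with hm
  set x : ℝ := ((q:ℝ))⁻¹ with hxdef
  have hQpos : (0:ℝ) < (q:ℝ)^(m*(n-m)) := by positivity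
  have hsum : ∑ k ∈ range (n+1), x^((if k ≤ m then m - k else k - m - 1)^2) < 2 * theta q := by
    have hn1 : n + 1 = (m+1) + (n - m) := by omega
    rw [hn1, Finset.sum_range_add]
    have hfirst : ∑ i ∈ range (m+1), x^((if i ≤ m then m - i else i - m - 1)^2)
        = ∑ j ∈ range (m+1), x^(j*j) := by
      rw [← Finset.sum_range_reflect (fun j => x^(j*j)) (m+1)]
      refine Finset.sum_congr rfl fun i hi => ?_
      rw [Finset.mem_range] at hi
      rw [if_pos (by omega)]
      congr 1
      have : m + 1 - 1 - i = m - i := by omega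
      rw [this, Nat.pow_two]
    have hsecond : ∑ i ∈ range (n - m), x^((if (m+1)+i ≤ m then m - ((m+1)+i) else (m+1)+i - m - 1)^2)
        = ∑ i ∈ range (n - m), x^(i*i) := by
      refine Finset.sum_congr rfl fun i hi => ?_
      rw [if_neg (by omega)]
      congr 1
      have : (m+1)+i - m - 1 = i := by omega
      rw [this, Nat.pow_two]
    rw [hfirst, hsecond, two_mul]
    exact add_lt_add (sum_lt_theta hq (m+1)) (sum_lt_theta hq (n-m))
  calc ∑ k ∈ range (n+1), (q:ℝ)^(k*(n-k))
      ≤ ∑ k ∈ range (n+1), (q:ℝ)^(m*(n-m)) * x^((if k ≤ m then m - k else k - m - 1)^2) :=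
        Finset.sum_le_sum fun k hk => term_bound hq n k (by rw [Finset.mem_range] at hk; omega)
    _ = (q:ℝ)^(m*(n-m)) * ∑ k ∈ range (n+1), x^((if k ≤ m then m - k else k - m - 1)^2) := by
        rw [Finset.mul_sum]
    _ < _ := by exact mul_lt_mul_of_pos_left hsum hQpos

end TermBound


theorem card_projectiveSpace_bounds (q n : ℕ) (hn : 1 ≤ n)
    (F : Type) [Field F] [Fintype F] (hF : Fintype.card F = q) :
    (q : ℝ) ^ (n / 2 * (n - n / 2)) ≤ (Nat.card (Submodule F (Fin n → F)) : ℝ) ∧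
      (Nat.card (Submodule F (Fin n → F)) : ℝ) <
        2 * (Kq q)⁻¹ * theta q * (q : ℝ) ^ (n / 2 * (n - n / 2)) := by
  have hq : 2 ≤ q := by rw [← hF]; exact Fintype.one_lt_card
  have hq1 : (1:ℕ) ≤ q := by omega
  have hKpos := Kq_pos hq
  have hKne : Kq q ≠ 0 := hKpos.ne'
  constructor
  · have h := card_lower F n (n/2) (Nat.div_le_self n 2)
    rw [hF] at h
    exact_mod_cast h
  · have hpart := card_partition F n
    have hterm : ∀ k ∈ range (n+1),
        (Nat.card {W : Submodule F (Fin n → F) // Module.finrank F W = k} : ℝ)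
          ≤ (Kq q)⁻¹ * (q:ℝ)^(k*(n-k)) := by
      intro k hkmem
      have hk : k ≤ n := by rw [Finset.mem_range] at hkmem; omega
      have hnat := card_dim_le F n k hk
      rw [hF] at hnat
      set S := Nat.card {W : Submodule F (Fin n → F) // Module.finrank F W = k} with hSdef
      have hcast : ((∏ i ∈ range k, (q^k - q^i) : ℕ) : ℝ)
          = ∏ i ∈ range k, ((q:ℝ)^k - (q:ℝ)^i) := by
        rw [Nat.cast_prod]
        refine Finset.prod_congr rfl fun i hi => ?_
        rw [Finset.mem_range] at hi
        rw [Nat.cast_sub (Nat.pow_le_pow_right hq1 (le_of_lt hi))]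
        push_cast
        ring
      have hfac : ∏ i ∈ range k, ((q:ℝ)^k - (q:ℝ)^i)
          = (q:ℝ)^(k*k) * ∏ j ∈ range k, (1 - ((q:ℝ))⁻¹^(j+1)) := by
        have step1 : ∀ i ∈ range k, (q:ℝ)^k - (q:ℝ)^i
            = (q:ℝ)^k * (1 - ((q:ℝ))⁻¹^(k-i)) := by
          intro i hi
          rw [Finset.mem_range] at hi
          have hq0 : ((q:ℝ)) ≠ 0 := by positivity
          have hpowsplit : (q:ℝ)^i * ((q:ℝ))^(k-i) = (q:ℝ)^k := by
            rw [← pow_add]; congr 1; omega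
          have hxpow : (q:ℝ)^k * ((q:ℝ))⁻¹^(k-i) = (q:ℝ)^i := by
            rw [inv_pow, ← hpowsplit]
            field_simp
          rw [mul_sub, mul_one, hxpow]
        rw [Finset.prod_congr rfl step1, Finset.prod_mul_distrib, Finset.prod_const,
          Finset.card_range, ← pow_mul]
        congr 1
        rw [← Finset.prod_range_reflect (fun j => 1 - ((q:ℝ))⁻¹^(j+1)) k]
        refine Finset.prod_congr rfl fun i hi => ?_
        rw [Finset.mem_range] at hi
        congr 2
        omega
      have hKineq : (q:ℝ)^(k*k) * Kq q ≤ ((∏ i ∈ range k, (q^k - q^i) : ℕ) : ℝ) := by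
        rw [hcast, hfac]
        exact mul_le_mul_of_nonneg_left (Kq_le_prod hq k) (by positivity)
      have hmul : (S:ℝ) * ((q:ℝ)^(k*k) * Kq q) ≤ (q:ℝ)^(n*k) := by
        calc (S:ℝ) * ((q:ℝ)^(k*k) * Kq q)
            ≤ (S:ℝ) * ((∏ i ∈ range k, (q^k - q^i) : ℕ) : ℝ) :=
              mul_le_mul_of_nonneg_left hKineq (Nat.cast_nonneg S)
          _ = ((S * ∏ i ∈ range k, (q^k - q^i) : ℕ) : ℝ) := by push_cast; ring
          _ ≤ (q:ℝ)^(n*k) := by exact_mod_cast hnat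
      have hpos2 : (0:ℝ) < (q:ℝ)^(k*k) * Kq q := by
        apply mul_pos _ hKpos
        have : (0:ℝ) < (q:ℝ) := by exact_mod_cast (by omega : 0 < q)
        positivity
      have hS : (S:ℝ) ≤ (q:ℝ)^(n*k) / ((q:ℝ)^(k*k) * Kq q) := (le_div_iff₀ hpos2).2 hmul
      have hid : k*(n-k) + k*k = n*k := by
        have h2 : (n - k) + k = n := Nat.sub_add_cancel hk
        calc k*(n-k) + k*k = k*((n-k)+k) := by ring
          _ = k*n := by rw [h2]
          _ = n*k := Nat.mul_comm k n
      have hfrac : (q:ℝ)^(n*k) / ((q:ℝ)^(k*k) * Kq q) = (Kq q)⁻¹ * (q:ℝ)^(k*(n-k)) := by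
        rw [← hid, pow_add]
        have hqk : ((q:ℝ))^(k*k) ≠ 0 := by
          have : (0:ℝ) < (q:ℝ) := by exact_mod_cast (by omega : 0 < q)
          positivity
        field_simp
      exact hS.trans_eq hfrac
    calc (Nat.card (Submodule F (Fin n → F)) : ℝ)
        = ∑ k ∈ range (n+1),
            (Nat.card {W : Submodule F (Fin n → F) // Module.finrank F W = k} : ℝ) := by
          rw [hpart]; push_cast; rfl
      _ ≤ ∑ k ∈ range (n+1), (Kq q)⁻¹ * (q:ℝ)^(k*(n-k)) := Finset.sum_le_sum hterm
      _ = (Kq q)⁻¹ * ∑ k ∈ range (n+1), (q:ℝ)^(k*(n-k)) := by rw [← Finset.mul_sum]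
      _ < (Kq q)⁻¹ * ((q:ℝ)^(n/2*(n-n/2)) * (2 * theta q)) :=
          mul_lt_mul_of_pos_left (sum_pow_lt hq n) (inv_pos.2 hKpos)
      _ = 2 * (Kq q)⁻¹ * theta q * (q:ℝ)^(n/2*(n-n/2)) := by ring
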